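/- The function $\omega_t := \sum_{G \subseteq L} a_G(t) R_G(\omega_0)$, with $a_G(t) = \prod_{\alpha \in L\setminus G} e^{-\varrho_\alpha t}\prod_{\beta \in G}(1-e^{-\varrho_\beta t})$, solves the recombination ODE: $\frac{d}{dt}\omega_t = \sum_{\alpha \in L}\varrho_\alpha(R_\alpha(\omega_t) - \omega_t)$ with $\omega_{t=0} = \omega_0$, in the special case of two links ($|L| = 2$, i.e., three sites). -/

import Mathlib

open Finset

/-- Total mass of a population on three sites. -/
noncomputable def mass {X : Fin 3 → Type*} [∀ i, Fintype (X i)]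
    (ω : (∀ i, X i) → ℝ) : ℝ := ∑ x, ω x

/-- Leading marginal `π_{<α}.ω` (sites `0,…,α`), encoded on full types. -/
noncomputable def margLe {X : Fin 3 → Type*} [∀ i, Fintype (X i)] [∀ i, DecidableEq (X i)]
    (α : Fin 2) (ω : (∀ i, X i) → ℝ) : (∀ i, X i) → ℝ :=
  fun x => ∑ y, if ∀ i : Fin 3, (i : ℕ) ≤ (α : ℕ) → y i = x i then ω y else 0

/-- Trailing marginal `π_{>α}.ω` (sites `α+1,…,2`). -/
noncomputable def margGt {X : Fin 3 → Type*} [∀ i, Fintype (X i)] [∀ i, DecidableEq (X i)]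
    (α : Fin 2) (ω : (∀ i, X i) → ℝ) : (∀ i, X i) → ℝ :=
  fun x => ∑ y, if ∀ i : Fin 3, (α : ℕ) < (i : ℕ) → y i = x i then ω y else 0

/-- Elementary recombinator at link `α`. -/
noncomputable def reco {X : Fin 3 → Type*} [∀ i, Fintype (X i)] [∀ i, DecidableEq (X i)]
    (α : Fin 2) (ω : (∀ i, X i) → ℝ) : (∀ i, X i) → ℝ :=
  fun x => (mass ω)⁻¹ * (margLe α ω x * margGt α ω x)

/-- Composite recombinator `R_G`. -/
noncomputable def recoSet {X : Fin 3 → Type*} [∀ i, Fintype (X i)] [∀ i, DecidableEq (X i)]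
    (G : Finset (Fin 2)) (ω : (∀ i, X i) → ℝ) : (∀ i, X i) → ℝ :=
  (G.sort (· ≤ ·)).foldr (fun α ω' => reco α ω') ω

/-- The coefficient functions
`a_G(t) = ∏_{α ∈ L\G} e^{-ϱ_α t} ∏_{β ∈ G} (1 - e^{-ϱ_β t})`. -/
noncomputable def aCoef (ρ : Fin 2 → ℝ) (G : Finset (Fin 2)) (t : ℝ) : ℝ :=
  (∏ α ∈ Gᶜ, Real.exp (-ρ α * t)) * ∏ β ∈ G, (1 - Real.exp (-ρ β * t))

/-- The candidate solution `ω_t = ∑_{G ⊆ L} a_G(t) R_G(ω₀)`. -/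
noncomputable def omegaSol {X : Fin 3 → Type*} [∀ i, Fintype (X i)] [∀ i, DecidableEq (X i)]
    (ρ : Fin 2 → ℝ) (ω₀ : (∀ i, X i) → ℝ) (t : ℝ) : (∀ i, X i) → ℝ :=
  fun x => ∑ G ∈ (Finset.univ : Finset (Fin 2)).powerset, aCoef ρ G t * recoSet G ω₀ x

set_option linter.unusedSectionVars false

section
variable {X : Fin 3 → Type*} [∀ i, Fintype (X i)] [∀ i, DecidableEq (X i)]

def tripl (a : X 0) (b : X 1) (c : X 2) : ∀ i : Fin 3, X i
  | ⟨0, _⟩ => a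
  | ⟨1, _⟩ => b
  | ⟨2, _⟩ => c

@[simp] lemma tripl_zero (a : X 0) (b : X 1) (c : X 2) : tripl a b c 0 = a := rfl
@[simp] lemma tripl_one (a : X 0) (b : X 1) (c : X 2) : tripl a b c 1 = b := rfl
@[simp] lemma tripl_two (a : X 0) (b : X 1) (c : X 2) : tripl a b c 2 = c := rfl

def triplEquiv : (X 0 × X 1 × X 2) ≃ (∀ i : Fin 3, X i) where
  toFun p := tripl p.1 p.2.1 p.2.2
  invFun y := (y 0, y 1, y 2)
  left_inv p := rfl
  right_inv y := by funext i; fin_cases i <;> rfl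

lemma sum_tripl (f : (∀ i, X i) → ℝ) :
    ∑ y, f y = ∑ a, ∑ b, ∑ c, f (tripl a b c) := by
  rw [← (triplEquiv (X := X)).sum_comp f]
  simp [triplEquiv, Fintype.sum_prod_type]
  rfl

lemma forall_fin3 (P : Fin 3 → Prop) : (∀ i, P i) ↔ P 0 ∧ P 1 ∧ P 2 := by
  constructor
  · exact fun h => ⟨h 0, h 1, h 2⟩
  · rintro ⟨h0, h1, h2⟩ i; fin_cases i <;> assumption

noncomputable def s0 (ω : (∀ i, X i) → ℝ) (a : X 0) : ℝ := ∑ b, ∑ c, ω (tripl a b c)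
noncomputable def s1 (ω : (∀ i, X i) → ℝ) (b : X 1) : ℝ := ∑ a, ∑ c, ω (tripl a b c)
noncomputable def s2 (ω : (∀ i, X i) → ℝ) (c : X 2) : ℝ := ∑ a, ∑ b, ω (tripl a b c)
noncomputable def s01 (ω : (∀ i, X i) → ℝ) (a : X 0) (b : X 1) : ℝ := ∑ c, ω (tripl a b c)
noncomputable def s12 (ω : (∀ i, X i) → ℝ) (b : X 1) (c : X 2) : ℝ := ∑ a, ω (tripl a b c)

lemma mass_eq (ω : (∀ i, X i) → ℝ) : mass ω = ∑ a, s0 ω a := by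
  rw [mass, sum_tripl]; rfl

lemma margLe_zero (ω : (∀ i, X i) → ℝ) (x : ∀ i, X i) :
    margLe 0 ω x = s0 ω (x 0) := by
  rw [margLe, sum_tripl (f := fun y => if ∀ i : Fin 3, (i : ℕ) ≤ ((0:Fin 2) : ℕ) → y i = x i then ω y else 0)]
  have : ∀ (a : X 0) (b : X 1) (c : X 2),
      (if ∀ i : Fin 3, (i : ℕ) ≤ ((0:Fin 2) : ℕ) → tripl a b c i = x i then ω (tripl a b c) else 0)
      = if a = x 0 then ω (tripl a b c) else 0 := by
    intro a b c; congr 1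
    rw [forall_fin3]; norm_num
  simp only [this]
  calc ∑ a, ∑ b, ∑ c, (if a = x 0 then ω (tripl a b c) else 0)
      = ∑ a, (if a = x 0 then ∑ b, ∑ c, ω (tripl a b c) else 0) := by
        refine Finset.sum_congr rfl fun a _ => ?_
        split <;> simp
    _ = s0 ω (x 0) := by rw [Finset.sum_ite_eq' univ (x 0)]; simp [s0]

lemma margLe_one (ω : (∀ i, X i) → ℝ) (x : ∀ i, X i) :
    margLe 1 ω x = s01 ω (x 0) (x 1) := by
  rw [margLe, sum_tripl (f := fun y => if ∀ i : Fin 3, (i : ℕ) ≤ ((1:Fin 2) : ℕ) → y i = x i then ω y else 0)]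
  have : ∀ (a : X 0) (b : X 1) (c : X 2),
      (if ∀ i : Fin 3, (i : ℕ) ≤ ((1:Fin 2) : ℕ) → tripl a b c i = x i then ω (tripl a b c) else 0)
      = if a = x 0 then (if b = x 1 then ω (tripl a b c) else 0) else 0 := by
    intro a b c
    have hcond : (∀ i : Fin 3, (i : ℕ) ≤ ((1:Fin 2) : ℕ) → tripl a b c i = x i) ↔ (a = x 0 ∧ b = x 1) := by
      rw [forall_fin3]; norm_num
    simp only [hcond, ite_and]
  simp only [this]
  calc ∑ a, ∑ b, ∑ c, (if a = x 0 then (if b = x 1 then ω (tripl a b c) else 0) else 0)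
      = ∑ a, (if a = x 0 then ∑ b, (if b = x 1 then ∑ c, ω (tripl a b c) else 0) else 0) := by
        refine Finset.sum_congr rfl fun a _ => ?_
        split
        · refine Finset.sum_congr rfl fun b _ => ?_; split <;> simp
        · simp
    _ = s01 ω (x 0) (x 1) := by
        rw [Finset.sum_ite_eq' univ (x 0), if_pos (mem_univ _),
          Finset.sum_ite_eq' univ (x 1), if_pos (mem_univ _)]; rfl

lemma margGt_zero (ω : (∀ i, X i) → ℝ) (x : ∀ i, X i) :
    margGt 0 ω x = s12 ω (x 1) (x 2) := by
  rw [margGt, sum_tripl (f := fun y => if ∀ i : Fin 3, ((0:Fin 2) : ℕ) < (i : ℕ) → y i = x i then ω y else 0)]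
  have : ∀ (a : X 0) (b : X 1) (c : X 2),
      (if ∀ i : Fin 3, ((0:Fin 2) : ℕ) < (i : ℕ) → tripl a b c i = x i then ω (tripl a b c) else 0)
      = if b = x 1 then (if c = x 2 then ω (tripl a b c) else 0) else 0 := by
    intro a b c
    have hcond : (∀ i : Fin 3, ((0:Fin 2) : ℕ) < (i : ℕ) → tripl a b c i = x i) ↔ (b = x 1 ∧ c = x 2) := by
      rw [forall_fin3]; norm_num
    simp only [hcond, ite_and]
  simp only [this]
  rw [Finset.sum_comm]
  calc ∑ b, ∑ a, ∑ c, (if b = x 1 then (if c = x 2 then ω (tripl a b c) else 0) else 0)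
      = ∑ b, (if b = x 1 then ∑ a, (∑ c, (if c = x 2 then ω (tripl a b c) else 0)) else 0) := by
        refine Finset.sum_congr rfl fun b _ => ?_
        split <;> simp
    _ = s12 ω (x 1) (x 2) := by
        rw [Finset.sum_ite_eq' univ (x 1), if_pos (mem_univ _)]
        rw [s12]
        refine Finset.sum_congr rfl fun a _ => ?_
        rw [Finset.sum_ite_eq' univ (x 2), if_pos (mem_univ _)]

lemma margGt_one (ω : (∀ i, X i) → ℝ) (x : ∀ i, X i) :
    margGt 1 ω x = s2 ω (x 2) := by
  rw [margGt, sum_tripl (f := fun y => if ∀ i : Fin 3, ((1:Fin 2) : ℕ) < (i : ℕ) → y i = x i then ω y else 0)]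
  have : ∀ (a : X 0) (b : X 1) (c : X 2),
      (if ∀ i : Fin 3, ((1:Fin 2) : ℕ) < (i : ℕ) → tripl a b c i = x i then ω (tripl a b c) else 0)
      = if c = x 2 then ω (tripl a b c) else 0 := by
    intro a b c; congr 1
    rw [forall_fin3]; norm_num
  simp only [this]
  rw [s2]
  refine Finset.sum_congr rfl fun a _ => Finset.sum_congr rfl fun b _ => ?_
  rw [Finset.sum_ite_eq' univ (x 2), if_pos (mem_univ _)]

-- sum facts
variable (ω : (∀ i, X i) → ℝ)

lemma sum_s0 : ∑ a, s0 ω a = mass ω := (mass_eq ω).symm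
lemma sum_s01 (a : X 0) : ∑ b, s01 ω a b = s0 ω a := rfl
lemma sum_s01' (b : X 1) : ∑ a, s01 ω a b = s1 ω b := rfl
lemma sum_s12_c (b : X 1) : ∑ c, s12 ω b c = s1 ω b := Finset.sum_comm
lemma sum_s12_b (c : X 2) : ∑ b, s12 ω b c = s2 ω c := Finset.sum_comm
lemma sum_s1 : ∑ b, s1 ω b = mass ω := by rw [mass_eq]; exact Finset.sum_comm
lemma sum_s2 : ∑ c, s2 ω c = mass ω := by
  rw [mass_eq]
  calc ∑ c, ∑ a, ∑ b, ω (tripl a b c) = ∑ a, ∑ c, ∑ b, ω (tripl a b c) := Finset.sum_comm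
    _ = ∑ a, ∑ b, ∑ c, ω (tripl a b c) := Finset.sum_congr rfl fun a _ => Finset.sum_comm
    _ = _ := rfl
lemma sum_s12 : ∑ b, ∑ c, s12 ω b c = mass ω := by
  simp only [sum_s12_c]; exact sum_s1 ω

-- linearity
lemma margLe_add (α : Fin 2) (f g : (∀ i, X i) → ℝ) (x : ∀ i, X i) :
    margLe α (fun y => f y + g y) x = margLe α f x + margLe α g x := by
  rw [margLe, margLe, margLe, ← Finset.sum_add_distrib]
  exact Finset.sum_congr rfl fun y _ => by split <;> simp
lemma margLe_mul (α : Fin 2) (r : ℝ) (f : (∀ i, X i) → ℝ) (x : ∀ i, X i) :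
    margLe α (fun y => r * f y) x = r * margLe α f x := by
  rw [margLe, margLe, Finset.mul_sum]
  exact Finset.sum_congr rfl fun y _ => by split <;> simp
lemma margGt_add (α : Fin 2) (f g : (∀ i, X i) → ℝ) (x : ∀ i, X i) :
    margGt α (fun y => f y + g y) x = margGt α f x + margGt α g x := by
  rw [margGt, margGt, margGt, ← Finset.sum_add_distrib]
  exact Finset.sum_congr rfl fun y _ => by split <;> simp
lemma margGt_mul (α : Fin 2) (r : ℝ) (f : (∀ i, X i) → ℝ) (x : ∀ i, X i) :
    margGt α (fun y => r * f y) x = r * margGt α f x := by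
  rw [margGt, margGt, Finset.mul_sum]
  exact Finset.sum_congr rfl fun y _ => by split <;> simp
lemma mass_add (f g : (∀ i, X i) → ℝ) :
    mass (fun y => f y + g y) = mass f + mass g := by
  simp [mass, Finset.sum_add_distrib]
lemma mass_mul (r : ℝ) (f : (∀ i, X i) → ℝ) :
    mass (fun y => r * f y) = r * mass f := by
  simp [mass, Finset.mul_sum]

-- pointwise reco
lemma reco_zero_apply (x : ∀ i, X i) :
    reco 0 ω x = (mass ω)⁻¹ * (s0 ω (x 0) * s12 ω (x 1) (x 2)) := by
  rw [reco, margLe_zero, margGt_zero]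
lemma reco_one_apply (x : ∀ i, X i) :
    reco 1 ω x = (mass ω)⁻¹ * (s01 ω (x 0) (x 1) * s2 ω (x 2)) := by
  rw [reco, margLe_one, margGt_one]

variable {ω}
variable (hm : mass ω ≠ 0)
include hm

lemma s0_reco_zero (a : X 0) : s0 (reco 0 ω) a = s0 ω a := by
  rw [s0]
  simp only [reco_zero_apply, tripl_zero, tripl_one, tripl_two,
    ← Finset.mul_sum, ← Finset.sum_mul]
  rw [sum_s12]
  field_simp
lemma s0_reco_one (a : X 0) : s0 (reco 1 ω) a = s0 ω a := by
  rw [s0]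
  simp only [reco_one_apply, tripl_zero, tripl_one, tripl_two,
    ← Finset.mul_sum, ← Finset.sum_mul]
  rw [sum_s2, sum_s01]
  field_simp
lemma s1_reco_one (b : X 1) : s1 (reco 1 ω) b = s1 ω b := by
  rw [s1]
  simp only [reco_one_apply, tripl_zero, tripl_one, tripl_two,
    ← Finset.mul_sum, ← Finset.sum_mul]
  rw [sum_s2, sum_s01']
  field_simp
lemma s2_reco_zero (c : X 2) : s2 (reco 0 ω) c = s2 ω c := by
  rw [s2]
  simp only [reco_zero_apply, tripl_zero, tripl_one, tripl_two,
    ← Finset.mul_sum, ← Finset.sum_mul]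
  rw [sum_s12_b, sum_s0]
  field_simp
lemma s2_reco_one (c : X 2) : s2 (reco 1 ω) c = s2 ω c := by
  rw [s2]
  simp only [reco_one_apply, tripl_zero, tripl_one, tripl_two,
    ← Finset.mul_sum, ← Finset.sum_mul]
  rw [show (∑ a, ∑ b, s01 ω a b) = mass ω from mass_eq ω ▸ rfl]
  field_simp
lemma s01_reco_one (a : X 0) (b : X 1) : s01 (reco 1 ω) a b = s01 ω a b := by
  rw [s01]
  simp only [reco_one_apply, tripl_zero, tripl_one, tripl_two,
    ← Finset.mul_sum, ← Finset.sum_mul]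
  rw [sum_s2]
  field_simp
lemma s12_reco_zero (b : X 1) (c : X 2) : s12 (reco 0 ω) b c = s12 ω b c := by
  rw [s12]
  simp only [reco_zero_apply, tripl_zero, tripl_one, tripl_two,
    ← Finset.mul_sum, ← Finset.sum_mul]
  rw [sum_s0]
  field_simp
lemma s12_reco_one (b : X 1) (c : X 2) :
    s12 (reco 1 ω) b c = (mass ω)⁻¹ * (s1 ω b * s2 ω c) := by
  rw [s12]
  simp only [reco_one_apply, tripl_zero, tripl_one, tripl_two,
    ← Finset.mul_sum, ← Finset.sum_mul]
  rw [sum_s01']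
lemma s01_reco_zero (a : X 0) (b : X 1) :
    s01 (reco 0 ω) a b = (mass ω)⁻¹ * (s0 ω a * s1 ω b) := by
  rw [s01]
  simp only [reco_zero_apply, tripl_zero, tripl_one, tripl_two,
    ← Finset.mul_sum, ← Finset.sum_mul]
  rw [sum_s12_c]
lemma mass_reco_zero : mass (reco 0 ω) = mass ω := by
  rw [mass_eq]
  simp only [s0_reco_zero hm]
  exact (mass_eq ω).symm
lemma mass_reco_one : mass (reco 1 ω) = mass ω := by
  rw [mass_eq]
  simp only [s0_reco_one hm]
  exact (mass_eq ω).symm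

lemma reco01_apply (x : ∀ i, X i) :
    reco 0 (reco 1 ω) x
      = (mass ω)⁻¹ * (s0 ω (x 0) * ((mass ω)⁻¹ * (s1 ω (x 1) * s2 ω (x 2)))) := by
  rw [reco_zero_apply, mass_reco_one hm, s0_reco_one hm, s12_reco_one hm]

omit hm

lemma recoSet_empty : recoSet ∅ ω = ω := by
  rw [recoSet, Finset.sort_empty]
  rfl

lemma recoSet_single (α : Fin 2) : recoSet {α} ω = reco α ω := by
  rw [recoSet, Finset.sort_singleton]
  rfl

lemma recoSet_pair : recoSet {0, 1} ω = reco 0 (reco 1 ω) := by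
  rw [recoSet, show ({0, 1} : Finset (Fin 2)).sort (· ≤ ·) = [0, 1] from by
    rw [Finset.sort_insert (· ≤ ·) (by decide) (by decide), Finset.sort_singleton]]
  rfl

lemma aCoef_empty (ρ : Fin 2 → ℝ) (t : ℝ) :
    aCoef ρ ∅ t = Real.exp (-ρ 0 * t) * Real.exp (-ρ 1 * t) := by
  rw [aCoef, Finset.compl_empty, Fin.prod_univ_two, Finset.prod_empty, mul_one]

lemma aCoef_zero (ρ : Fin 2 → ℝ) (t : ℝ) :
    aCoef ρ {0} t = Real.exp (-ρ 1 * t) * (1 - Real.exp (-ρ 0 * t)) := by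
  rw [aCoef, show ({0} : Finset (Fin 2))ᶜ = {1} from by decide,
    Finset.prod_singleton, Finset.prod_singleton]

lemma aCoef_one (ρ : Fin 2 → ℝ) (t : ℝ) :
    aCoef ρ {1} t = Real.exp (-ρ 0 * t) * (1 - Real.exp (-ρ 1 * t)) := by
  rw [aCoef, show ({1} : Finset (Fin 2))ᶜ = {0} from by decide,
    Finset.prod_singleton, Finset.prod_singleton]

lemma aCoef_pair (ρ : Fin 2 → ℝ) (t : ℝ) :
    aCoef ρ {0, 1} t = (1 - Real.exp (-ρ 0 * t)) * (1 - Real.exp (-ρ 1 * t)) := by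
  rw [aCoef, show ({0, 1} : Finset (Fin 2))ᶜ = ∅ from by decide, Finset.prod_empty,
    Finset.prod_pair (by decide), one_mul]

lemma omegaSol_eq (ρ : Fin 2 → ℝ) (ω₀ : (∀ i, X i) → ℝ) (s : ℝ) (x : ∀ i, X i) :
    omegaSol ρ ω₀ s x =
      Real.exp (-ρ 0 * s) * Real.exp (-ρ 1 * s) * ω₀ x
      + (1 - Real.exp (-ρ 0 * s)) * Real.exp (-ρ 1 * s) * reco 0 ω₀ x
      + Real.exp (-ρ 0 * s) * (1 - Real.exp (-ρ 1 * s)) * reco 1 ω₀ x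
      + (1 - Real.exp (-ρ 0 * s)) * (1 - Real.exp (-ρ 1 * s)) * reco 0 (reco 1 ω₀) x := by
  rw [omegaSol, show (Finset.univ : Finset (Fin 2)).powerset = {∅, {0}, {1}, {0, 1}} from by decide]
  rw [Finset.sum_insert (by decide), Finset.sum_insert (by decide),
    Finset.sum_insert (by decide), Finset.sum_singleton]
  rw [recoSet_empty, recoSet_single, recoSet_single, recoSet_pair,
    aCoef_empty, aCoef_zero, aCoef_one, aCoef_pair]
  ring

end

theorem omegaSol_solves_recombination_ODE {X : Fin 3 → Type*}
    [∀ i, Fintype (X i)] [∀ i, DecidableEq (X i)] [∀ i, Nonempty (X i)]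
    (ρ : Fin 2 → ℝ) (hρ : ∀ α, 0 < ρ α)
    (ω₀ : (∀ i, X i) → ℝ) (h₀ : ∀ x, 0 ≤ ω₀ x) (hm : 0 < mass ω₀) :
    (∀ x, omegaSol ρ ω₀ 0 x = ω₀ x) ∧
      ∀ (t : ℝ) (x : ∀ i, X i),
        HasDerivAt (fun s => omegaSol ρ ω₀ s x)
          (∑ α : Fin 2, ρ α * (reco α (omegaSol ρ ω₀ t) x - omegaSol ρ ω₀ t x)) t := by

  have hm0 : mass ω₀ ≠ 0 := ne_of_gt hm
  have hm1 : mass (reco 1 ω₀) ≠ 0 := by rw [mass_reco_one hm0]; exact hm0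
  constructor
  · intro x
    rw [omegaSol_eq]
    norm_num
  · intro t x
    -- derivative of the exponentials
    have h0 : HasDerivAt (fun s : ℝ => Real.exp (-ρ 0 * s)) (-ρ 0 * Real.exp (-ρ 0 * t)) t := by
      have h := ((hasDerivAt_id t).const_mul (-ρ 0)).exp
      convert h using 1
      simp only [id_eq]
      simp only [id_eq]
      ring
    have h1 : HasDerivAt (fun s : ℝ => Real.exp (-ρ 1 * s)) (-ρ 1 * Real.exp (-ρ 1 * t)) t := by
      have h := ((hasDerivAt_id t).const_mul (-ρ 1)).exp
      convert h using 1
      simp only [id_eq]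
      simp only [id_eq]
      ring
    have H := ((((h0.mul h1).mul_const (ω₀ x)).add
        (((h0.const_sub 1).mul h1).mul_const (reco 0 ω₀ x))).add
        ((h0.mul (h1.const_sub 1)).mul_const (reco 1 ω₀ x))).add
        (((h0.const_sub 1).mul (h1.const_sub 1)).mul_const (reco 0 (reco 1 ω₀) x))
    have H2 := H.congr_of_eventuallyEq
      (Filter.Eventually.of_forall fun s => (omegaSol_eq ρ ω₀ s x))
    -- now identify the derivative values
    convert H2 using 1
    · rfl
    · rfl
    -- abbreviations
    have hWt : omegaSol ρ ω₀ t = (fun y =>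
        Real.exp (-ρ 0 * t) * Real.exp (-ρ 1 * t) * ω₀ y
        + (1 - Real.exp (-ρ 0 * t)) * Real.exp (-ρ 1 * t) * reco 0 ω₀ y
        + Real.exp (-ρ 0 * t) * (1 - Real.exp (-ρ 1 * t)) * reco 1 ω₀ y
        + (1 - Real.exp (-ρ 0 * t)) * (1 - Real.exp (-ρ 1 * t)) * reco 0 (reco 1 ω₀) y) :=
      funext fun y => omegaSol_eq ρ ω₀ t y
    have hmassWt : mass (omegaSol ρ ω₀ t) = mass ω₀ := by
      rw [hWt, mass_add, mass_add, mass_add, mass_mul, mass_mul, mass_mul, mass_mul,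
        mass_reco_zero hm0, mass_reco_one hm0, mass_reco_zero hm1, mass_reco_one hm0]
      ring
    have hL0 : margLe 0 (omegaSol ρ ω₀ t) x = s0 ω₀ (x 0) := by
      rw [hWt, margLe_add, margLe_add, margLe_add, margLe_mul, margLe_mul, margLe_mul,
        margLe_mul, margLe_zero, margLe_zero, margLe_zero, margLe_zero,
        s0_reco_zero hm0, s0_reco_one hm0, s0_reco_zero hm1, s0_reco_one hm0]
      ring
    have hG0 : margGt 0 (omegaSol ρ ω₀ t) x
        = Real.exp (-ρ 1 * t) * s12 ω₀ (x 1) (x 2)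
          + (1 - Real.exp (-ρ 1 * t)) * ((mass ω₀)⁻¹ * (s1 ω₀ (x 1) * s2 ω₀ (x 2))) := by
      rw [hWt, margGt_add, margGt_add, margGt_add, margGt_mul, margGt_mul, margGt_mul,
        margGt_mul, margGt_zero, margGt_zero, margGt_zero, margGt_zero,
        s12_reco_zero hm0, s12_reco_one hm0, s12_reco_zero hm1, s12_reco_one hm0]
      ring
    have hL1 : margLe 1 (omegaSol ρ ω₀ t) x
        = Real.exp (-ρ 0 * t) * s01 ω₀ (x 0) (x 1)
          + (1 - Real.exp (-ρ 0 * t)) * ((mass ω₀)⁻¹ * (s0 ω₀ (x 0) * s1 ω₀ (x 1))) := by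
      rw [hWt, margLe_add, margLe_add, margLe_add, margLe_mul, margLe_mul, margLe_mul,
        margLe_mul, margLe_one, margLe_one, margLe_one, margLe_one,
        s01_reco_zero hm0, s01_reco_one hm0, s01_reco_zero hm1,
        s0_reco_one hm0, s1_reco_one hm0, mass_reco_one hm0]
      ring
    have hG1 : margGt 1 (omegaSol ρ ω₀ t) x = s2 ω₀ (x 2) := by
      rw [hWt, margGt_add, margGt_add, margGt_add, margGt_mul, margGt_mul, margGt_mul,
        margGt_mul, margGt_one, margGt_one, margGt_one, margGt_one,
        s2_reco_zero hm0, s2_reco_one hm0, s2_reco_zero hm1, s2_reco_one hm0]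
      ring
    rw [Fin.sum_univ_two, reco, reco, hmassWt, hL0, hG0, hL1, hG1,
      omegaSol_eq ρ ω₀ t x, reco_zero_apply, reco_one_apply, reco01_apply hm0]
    field_simp
    ring
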